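/- Compatibility of means: let f : ℝ → ℂ be a bounded almost periodic (Bochner) function admitting a uniform mean M ∈ ℂ, i.e. (1/X) ∫_0^X f(x + a) dx → M as X → +∞, uniformly in a ∈ ℝ. Then for every g ∈ L¹(ℝ, ℂ), the convolution f * g admits the mean M · ∫_ℝ g, i.e. (1/X) ∫_0^X (f * g)(x) dx → M · ∫_ℝ g(y) dy as X → +∞. In particular, for ρ with ∫ρ = 1 the mean of each regularization f * ρ_ε equals the mean of f. -/

import Mathlib

open Filter MeasureTheory Topology

noncomputable section

/-- A function `f : ℝ → ℂ` is almost periodic in the sense of Bochner: it is continuous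
and from every sequence of real translates one can extract a subsequence along which
the translates converge uniformly on `ℝ`. -/
def AlmostPeriodic (f : ℝ → ℂ) : Prop :=
  Continuous f ∧ ∀ h : ℕ → ℝ, ∃ φ : ℕ → ℕ, StrictMono φ ∧ ∃ g : ℝ → ℂ,
    TendstoUniformly (fun k x => f (x + h (φ k))) g atTop

/-- `f ∈ 𝓑_ap` : `f` is smooth and every derivative of `f` is almost periodic. -/
def BAp (f : ℝ → ℂ) : Prop :=
  ContDiff ℝ (⊤ : ℕ∞) f ∧ ∀ j : ℕ, AlmostPeriodic (iteratedDeriv j f)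

/-- The seminorm `|f|_{k,∞} = Σ_{j ≤ k} sup_{x ∈ ℝ} ‖f^{(j)}(x)‖`. -/
def apSeminorm (k : ℕ) (f : ℝ → ℂ) : ℝ :=
  ∑ j ∈ Finset.range (k + 1), ⨆ x : ℝ, ‖iteratedDeriv j f x‖

/-- A net `(u_ε)_{ε ∈ (0,1]}` is moderate. -/
def Moderate (u : ℝ → ℝ → ℂ) : Prop :=
  ∀ k : ℕ, ∃ m : ℕ, ∃ C > 0, ∃ ε₀ ∈ Set.Ioc (0:ℝ) 1,
    ∀ ε ∈ Set.Ioc (0:ℝ) 1, ε ≤ ε₀ → apSeminorm k (u ε) ≤ C / ε ^ m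

/-- A net `(u_ε)_{ε ∈ (0,1]}` is negligible. -/
def Negligible (u : ℝ → ℝ → ℂ) : Prop :=
  ∀ k m : ℕ, ∃ C > 0, ∃ ε₀ ∈ Set.Ioc (0:ℝ) 1,
    ∀ ε ∈ Set.Ioc (0:ℝ) 1, ε ≤ ε₀ → apSeminorm k (u ε) ≤ C * ε ^ m

/-- compatibility of means: if a bounded almost periodic function `f` has
uniform mean `M`, then for any `g ∈ L¹` the convolution `f * g` has mean `M · ∫ g`. -/
theorem mean_conv_compat (f : ℝ → ℂ) (hf : AlmostPeriodic f)
    (hbd : ∃ C : ℝ, ∀ x : ℝ, ‖f x‖ ≤ C) (M : ℂ)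
    (hM : TendstoUniformly
      (fun (X : ℝ) (a : ℝ) => (X : ℂ)⁻¹ * ∫ x in (0:ℝ)..X, f (x + a))
      (fun _ => M) atTop)
    (g : ℝ → ℂ) (hg : Integrable g) :
    Tendsto (fun X : ℝ => (X : ℂ)⁻¹ * ∫ x in (0:ℝ)..X, ∫ y : ℝ, f (x - y) * g y)
      atTop (nhds (M * ∫ y : ℝ, g y)) := by
  obtain ⟨C, hC⟩ := hbd
  have hfc : Continuous f := hf.1
  set G : ℝ := ∫ y : ℝ, ‖g y‖ with hGdef
  have hG0 : 0 ≤ G := integral_nonneg fun y => norm_nonneg _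
  rw [Metric.tendsto_nhds]
  intro ε hε
  have hε' : 0 < ε / (G + 1) / 2 := by positivity
  have hMu := Metric.tendstoUniformly_iff.mp hM (ε / (G + 1) / 2) hε'
  filter_upwards [hMu, eventually_gt_atTop (0:ℝ)] with X hX hX0
  set μ := volume.restrict (Set.Ioc (0:ℝ) X) with hμdef
  haveI : IsFiniteMeasure μ := by
    constructor
    rw [hμdef, Measure.restrict_apply MeasurableSet.univ, Set.univ_inter]
    exact (by simp : volume (Set.Ioc (0:ℝ) X) = ENNReal.ofReal X) ▸ ENNReal.ofReal_lt_top
  -- integrability of the product function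
  have hH : Integrable (fun p : ℝ × ℝ => f (p.1 - p.2) * g p.2) (μ.prod volume) := by
    have hmeas : AEStronglyMeasurable (fun p : ℝ × ℝ => f (p.1 - p.2) * g p.2) (μ.prod volume) :=
      ((hfc.comp (continuous_fst.sub continuous_snd)).aestronglyMeasurable).mul
        (hg.aestronglyMeasurable.comp_snd)
    have hdom : Integrable (fun p : ℝ × ℝ => C * ‖g p.2‖) (μ.prod volume) :=
      (integrable_const C).mul_prod hg.norm
    refine hdom.mono' hmeas (Eventually.of_forall fun p => ?_)
    rw [norm_mul]
    exact mul_le_mul_of_nonneg_right (hC _) (norm_nonneg _)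
  -- swap the integrals
  have hswap : (∫ x in (0:ℝ)..X, ∫ y : ℝ, f (x - y) * g y)
      = ∫ y : ℝ, (∫ x in (0:ℝ)..X, f (x + (-y))) * g y := by
    rw [intervalIntegral.integral_of_le hX0.le]
    rw [show (∫ x in Set.Ioc (0:ℝ) X, ∫ y : ℝ, f (x - y) * g y)
        = ∫ x, ∫ y : ℝ, f (x - y) * g y ∂volume ∂μ from rfl]
    rw [integral_integral_swap hH]
    refine integral_congr_ae (Eventually.of_forall fun y => ?_)
    show (∫ x, f (x - y) * g y ∂μ) = (∫ x in (0:ℝ)..X, f (x + (-y))) * g y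
    rw [intervalIntegral.integral_of_le hX0.le, ← integral_mul_const]
    refine integral_congr_ae (Eventually.of_forall fun x => ?_)
    simp only [sub_eq_add_neg]
  -- integrability facts
  have hIg : Integrable (fun y : ℝ => (∫ x in (0:ℝ)..X, f (x + (-y))) * g y) volume := by
    have h2 := hH.integral_prod_right
    refine h2.congr (Eventually.of_forall fun y => ?_)
    show (∫ x, f (x - y) * g y ∂μ) = (∫ x in (0:ℝ)..X, f (x + (-y))) * g y
    rw [intervalIntegral.integral_of_le hX0.le, ← integral_mul_const]
    refine integral_congr_ae (Eventually.of_forall fun x => ?_)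
    simp only [sub_eq_add_neg]
  have key : (X : ℂ)⁻¹ * (∫ x in (0:ℝ)..X, ∫ y : ℝ, f (x - y) * g y) - M * ∫ y : ℝ, g y
      = ∫ y : ℝ, ((X : ℂ)⁻¹ * (∫ x in (0:ℝ)..X, f (x + (-y))) - M) * g y := by
    rw [hswap, ← integral_const_mul, ← integral_const_mul, ← integral_sub
      (hIg.const_mul _) (hg.const_mul M)]
    refine integral_congr_ae (Eventually.of_forall fun y => ?_)
    ring
  rw [dist_eq_norm, key]
  have hbound : ‖∫ y : ℝ, ((X : ℂ)⁻¹ * (∫ x in (0:ℝ)..X, f (x + (-y))) - M) * g y‖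
      ≤ ∫ y : ℝ, (ε / (G + 1) / 2) * ‖g y‖ := by
    refine norm_integral_le_of_norm_le (hg.norm.const_mul _)
      (Eventually.of_forall fun y => ?_)
    rw [norm_mul]
    refine mul_le_mul_of_nonneg_right ?_ (norm_nonneg _)
    have := hX (-y)
    rw [dist_eq_norm, norm_sub_rev] at this
    exact this.le
  refine lt_of_le_of_lt hbound ?_
  rw [integral_const_mul]
  calc ε / (G + 1) / 2 * G ≤ ε / (G + 1) / 2 * (G + 1) := by
        exact mul_le_mul_of_nonneg_left (by linarith) hε'.le
  _ = ε / 2 := by field_simp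
  _ < ε := by linarith
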